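/- For every Kagan function f, D_f(T1) = 6√2·f(α) where α = arccos(1/3), and D_f(T2) = −(9/√2)·f(α). -/

import Mathlib

open Real MeasureTheory
noncomputable section
abbrev E3 := EuclideanSpace ℝ (Fin 3)
/-- The point (a,b,c) in Euclidean 3-space. -/
def pt (a b c : ℝ) : E3 := WithLp.toLp 2 ![a, b, c]
/-- Dihedral angle of the tetrahedron `conv {a,b,c,d}` at the edge `[a,b]`:
the angle between the components of `c - a` and `d - a` orthogonal to `b - a`. -/
def dihedral (a b c d : E3) : ℝ :=
  InnerProductGeometry.angle
    ((c - a) - ((inner ℝ (c - a) (b - a) : ℝ) / (inner ℝ (b - a) (b - a) : ℝ)) • (b - a))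
    ((d - a) - ((inner ℝ (d - a) (b - a) : ℝ) / (inner ℝ (b - a) (b - a) : ℝ)) • (b - a))
/-- The Dehn invariant `D_f` of the tetrahedron `conv {a,b,c,d}`:
sum over the six edges of (length) ⬝ f(dihedral angle). -/
def dehnTetra (f : ℝ → ℝ) (a b c d : E3) : ℝ :=
  dist a b * f (dihedral a b c d) + dist a c * f (dihedral a c b d) +
  dist a d * f (dihedral a d b c) + dist b c * f (dihedral b c a d) +
  dist b d * f (dihedral b d a c) + dist c d * f (dihedral c d a b)

lemma pt_sub (a b c a' b' c' : ℝ) : pt a b c - pt a' b' c' = pt (a-a') (b-b') (c-c') := by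
  ext i; fin_cases i <;> simp [pt]
lemma pt_smul (r a b c : ℝ) : r • pt a b c = pt (r*a) (r*b) (r*c) := by
  ext i; fin_cases i <;> simp [pt]
lemma inner_pt (a b c a' b' c' : ℝ) : (inner ℝ (pt a b c) (pt a' b' c') : ℝ) = a*a' + b*b' + c*c' := by
  simp [pt, PiLp.inner_apply, Fin.sum_univ_three]; ring
lemma norm_pt (a b c : ℝ) : ‖pt a b c‖ = Real.sqrt (a^2+b^2+c^2) := by
  simp [pt, EuclideanSpace.norm_eq, Fin.sum_univ_three]
lemma dist_pt (a b c a' b' c' : ℝ) :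
    dist (pt a b c) (pt a' b' c') = Real.sqrt ((a-a')^2+(b-b')^2+(c-c')^2) := by
  rw [dist_eq_norm, pt_sub, norm_pt]

lemma dihedral_pt (a1 a2 a3 b1 b2 b3 c1 c2 c3 d1 d2 d3 : ℝ) :
    dihedral (pt a1 a2 a3) (pt b1 b2 b3) (pt c1 c2 c3) (pt d1 d2 d3) =
    Real.arccos
     (let u1 := b1-a1; let u2 := b2-a2; let u3 := b3-a3;
      let v1 := c1-a1; let v2 := c2-a2; let v3 := c3-a3;
      let w1 := d1-a1; let w2 := d2-a2; let w3 := d3-a3;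
      let rv := (v1*u1+v2*u2+v3*u3)/(u1*u1+u2*u2+u3*u3);
      let rw := (w1*u1+w2*u2+w3*u3)/(u1*u1+u2*u2+u3*u3);
      let p1 := v1-rv*u1; let p2 := v2-rv*u2; let p3 := v3-rv*u3;
      let q1 := w1-rw*u1; let q2 := w2-rw*u2; let q3 := w3-rw*u3;
      (p1*q1+p2*q2+p3*q3) / (Real.sqrt (p1^2+p2^2+p3^2) * Real.sqrt (q1^2+q2^2+q3^2))) := by
  rw [dihedral, InnerProductGeometry.angle, pt_sub, pt_sub, pt_sub, inner_pt, inner_pt, inner_pt,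
    pt_smul, pt_smul, pt_sub, pt_sub, inner_pt, norm_pt, norm_pt]

lemma s2 : Real.sqrt 2 * Real.sqrt 2 = 2 := Real.mul_self_sqrt (by norm_num)
lemma s3 : Real.sqrt 3 * Real.sqrt 3 = 3 := Real.mul_self_sqrt (by norm_num)
lemma h9 : Real.sqrt 9 = 3 := by
  rw [show (9:ℝ) = 3^2 by norm_num, Real.sqrt_sq (by norm_num)]
lemma h27 : Real.sqrt 27 = 3 * Real.sqrt 3 := by
  rw [show (27:ℝ) = 3^2*3 by norm_num, Real.sqrt_mul (by positivity), Real.sqrt_sq (by norm_num)]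
lemma h18 : Real.sqrt 18 = 3 * Real.sqrt 2 := by
  rw [show (18:ℝ) = 3^2*2 by norm_num, Real.sqrt_mul (by positivity), Real.sqrt_sq (by norm_num)]

/-- common finishing tactic for T1 dihedrals -/
lemma t1_finish : Real.sqrt 3 / Real.sqrt 2 * (Real.sqrt 3 / Real.sqrt 2) = 3/2 := by
  rw [div_mul_div_comm, s2, s3]

lemma beta_eq : 2 * Real.arccos (Real.sqrt 3 / 3) + Real.arccos (1/3) = Real.pi := by
  have h3le : Real.sqrt 3 ≤ 3 := by nlinarith [s3, Real.sqrt_nonneg 3]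
  have hb0 : (0:ℝ) ≤ Real.sqrt 3 / 3 := by positivity
  have hcos : Real.cos (Real.arccos (Real.sqrt 3 / 3)) = Real.sqrt 3 / 3 :=
    Real.cos_arccos (by linarith) (by linarith)
  have h2b : Real.cos (2 * Real.arccos (Real.sqrt 3 / 3)) = -(1/3) := by
    rw [Real.cos_two_mul, hcos]; nlinarith [s3]
  have hnn : 0 ≤ Real.arccos (Real.sqrt 3 / 3) := Real.arccos_nonneg _
  have hle : Real.arccos (Real.sqrt 3 / 3) ≤ Real.pi / 2 := by
    rw [Real.arccos_le_pi_div_two]; exact hb0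
  have := Real.arccos_cos (by linarith : 0 ≤ 2 * Real.arccos (Real.sqrt 3 / 3))
    (by linarith : 2 * Real.arccos (Real.sqrt 3 / 3) ≤ Real.pi)
  rw [h2b, show (-(1/3) : ℝ) = -(1/3) from rfl, Real.arccos_neg] at this
  linarith [this]

set_option maxHeartbeats 1600000 in
theorem dehn_T1_T2 (f : ℝ → ℝ) (hadd : ∀ a b : ℝ, f (a + b) = f a + f b)
    (hpi : f Real.pi = 0) :
    dehnTetra f (pt 0 0 0) (pt 1 1 0) (pt 1 0 1) (pt 0 1 1)
      = 6 * Real.sqrt 2 * f (Real.arccos (1/3)) ∧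
    dehnTetra f (pt 0 0 0) (pt 2 2 (-1)) (pt 2 (-1) 2) (pt 1 (-2) (-2))
      = -(9 / Real.sqrt 2) * f (Real.arccos (1/3)) := by
  have fhalf : f (Real.pi / 2) = 0 := by
    have := hadd (Real.pi/2) (Real.pi/2)
    rw [add_halves, hpi] at this; linarith
  have fbeta : f (Real.arccos (Real.sqrt 3 / 3)) = -(f (Real.arccos (1/3)) / 2) := by
    have h : Real.arccos (1/3) + (Real.arccos (Real.sqrt 3 / 3) + Real.arccos (Real.sqrt 3 / 3))
        = Real.pi := by linarith [beta_eq]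
    have := hadd (Real.arccos (1/3)) (Real.arccos (Real.sqrt 3 / 3) + Real.arccos (Real.sqrt 3 / 3))
    rw [h, hpi, hadd] at this
    linarith
  constructor
  · -- T1
    have e1 : dihedral (pt 0 0 0) (pt 1 1 0) (pt 1 0 1) (pt 0 1 1) = Real.arccos (1/3) := by
      rw [dihedral_pt]; norm_num [t1_finish]
    have e2 : dihedral (pt 0 0 0) (pt 1 0 1) (pt 1 1 0) (pt 0 1 1) = Real.arccos (1/3) := by
      rw [dihedral_pt]; norm_num [t1_finish]
    have e3 : dihedral (pt 0 0 0) (pt 0 1 1) (pt 1 1 0) (pt 1 0 1) = Real.arccos (1/3) := by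
      rw [dihedral_pt]; norm_num [t1_finish]
    have e4 : dihedral (pt 1 1 0) (pt 1 0 1) (pt 0 0 0) (pt 0 1 1) = Real.arccos (1/3) := by
      rw [dihedral_pt]; norm_num [t1_finish]
    have e5 : dihedral (pt 1 1 0) (pt 0 1 1) (pt 0 0 0) (pt 1 0 1) = Real.arccos (1/3) := by
      rw [dihedral_pt]; norm_num [t1_finish]
    have e6 : dihedral (pt 1 0 1) (pt 0 1 1) (pt 0 0 0) (pt 1 1 0) = Real.arccos (1/3) := by
      rw [dihedral_pt]; norm_num [t1_finish]
    rw [dehnTetra, e1, e2, e3, e4, e5, e6, dist_pt, dist_pt, dist_pt, dist_pt, dist_pt, dist_pt]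
    norm_num; ring
  · -- T2
    have e1 : dihedral (pt 0 0 0) (pt 2 2 (-1)) (pt 2 (-1) 2) (pt 1 (-2) (-2)) = Real.pi/2 := by
      rw [dihedral_pt]; norm_num [Real.arccos_zero]
    have e2 : dihedral (pt 0 0 0) (pt 2 (-1) 2) (pt 2 2 (-1)) (pt 1 (-2) (-2)) = Real.pi/2 := by
      rw [dihedral_pt]; norm_num [Real.arccos_zero]
    have e3 : dihedral (pt 0 0 0) (pt 1 (-2) (-2)) (pt 2 2 (-1)) (pt 2 (-1) 2) = Real.pi/2 := by
      rw [dihedral_pt]; norm_num [Real.arccos_zero]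
    have hb : ∀ x : ℝ, x = 9/2 / (Real.sqrt 9 / Real.sqrt 2 * (Real.sqrt 27 / Real.sqrt 2)) →
        Real.arccos x = Real.arccos (Real.sqrt 3 / 3) := by
      intro x hx
      subst hx
      congr 1
      rw [h9, h27]
      have h2 : Real.sqrt 2 ≠ 0 := by positivity
      have h3 : Real.sqrt 3 ≠ 0 := by positivity
      field_simp
      nlinarith [s2, s3, Real.sqrt_nonneg 2, Real.sqrt_nonneg 3]
    have e4 : dihedral (pt 2 2 (-1)) (pt 2 (-1) 2) (pt 0 0 0) (pt 1 (-2) (-2))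
        = Real.arccos (Real.sqrt 3 / 3) := by
      rw [dihedral_pt]; norm_num; exact hb _ (by rw [h9])
    have e5 : dihedral (pt 2 2 (-1)) (pt 1 (-2) (-2)) (pt 0 0 0) (pt 2 (-1) 2)
        = Real.arccos (Real.sqrt 3 / 3) := by
      rw [dihedral_pt]; norm_num; exact hb _ (by rw [h9])
    have e6 : dihedral (pt 2 (-1) 2) (pt 1 (-2) (-2)) (pt 0 0 0) (pt 2 2 (-1))
        = Real.arccos (Real.sqrt 3 / 3) := by
      rw [dihedral_pt]; norm_num; exact hb _ (by rw [h9])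
    rw [dehnTetra, e1, e2, e3, e4, e5, e6, dist_pt, dist_pt, dist_pt, dist_pt, dist_pt, dist_pt]
    norm_num [h9, h18, fhalf, fbeta]
    have h2 : Real.sqrt 2 ≠ 0 := by positivity
    field_simp
    linear_combination (-9 * f (Real.arccos (1/3))) * s2
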